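/- arXiv:2011.02139 — 3 statements merged into one kernel-verified Lean document; each statement's English description precedes it below -/
import Mathlib

section
/- Let n ≥ 2 be even, let ρ = (n−1, n−2, ..., 1, 0) ∈ ℝ^n, and let v ∈ {−1,+1}^n be a vector with an even number of coordinates equal to −1. Suppose that the multiset {|v_i + ρ_i| : 1 ≤ i ≤ n} equals the multiset {n−1, n−2, ..., 1, 0}. Then v is the alternating vector (−1,1,−1,1,...,−1,1) if n/2 is even, and v = (−1,1,...,−1,−1) (alternating except the last coordinate is −1) if n/2 is odd. -/
private lemma aux_card_even (n : ℕ) :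
    ((Finset.range n).filter (fun i => i % 2 = 0)).card = (n + 1) / 2 := by
  induction n with
  | zero => simp
  | succ n ih =>
    rw [Finset.range_add_one, Finset.filter_insert]
    by_cases h : n % 2 = 0
    · rw [if_pos h, Finset.card_insert_of_notMem (by simp), ih]
      omega
    · rw [if_neg h, ih]; omega

/-- Lemma 4.1: let `n ≥ 2` be even, `ρ = (n-1,...,1,0)`, and `v ∈ {±1}^n` with an even
number of `-1`'s.  If the multiset `{|v_i + ρ_i|}` equals `{0,1,...,n-1}`, then `v` is the
alternating vector `(-1,1,...,-1,1)` when `n/2` is even, and `(-1,1,...,-1,-1)` (alternating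
except the last coordinate is `-1`) when `n/2` is odd. -/
theorem stmt_13 (n : ℕ) (hn : 2 ≤ n) (hne : Even n) (v : ℕ → ℤ)
    (hval : ∀ i < n, v i = 1 ∨ v i = -1)
    (hpar : Even (((Finset.range n).filter (fun i => v i = -1)).card))
    (hmult : Multiset.map (fun i => |v i + ((n : ℤ) - 1 - (i : ℤ))|) (Finset.range n).val
      = Multiset.map (fun j => (j : ℤ)) (Finset.range n).val) :
    (Even (n / 2) → ∀ i < n, v i = if i % 2 = 0 then -1 else 1) ∧
    (¬ Even (n / 2) →
      ∀ i < n, v i = if i = n - 1 then -1 else if i % 2 = 0 then -1 else 1) := by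
  have hn2 : n % 2 = 0 := Nat.even_iff.mp hne
  -- surjectivity of i ↦ |v i + ρ i| onto {0, ..., n-1}
  have hsurj : ∀ j < n, ∃ i < n, |v i + ((n : ℤ) - 1 - (i : ℤ))| = (j : ℤ) := by
    intro j hj
    have hmem : ((j : ℤ)) ∈ Multiset.map (fun i => |v i + ((n : ℤ) - 1 - (i : ℤ))|)
        (Finset.range n).val := by
      rw [hmult]
      exact Multiset.mem_map.2 ⟨j, by simpa using hj, rfl⟩
    obtain ⟨i, hi, hF⟩ := Multiset.mem_map.1 hmem
    exact ⟨i, by simpa using hi, hF⟩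
  -- even indices carry -1 (chain starting from value 0)
  have heven : ∀ m, 2 * m + 2 ≤ n → v (n - 2 - 2 * m) = -1 := by
    intro m
    induction m using Nat.strong_induction_on with
    | _ m IH =>
      intro hm
      obtain ⟨i, hi, hF⟩ := hsurj (2 * m) (by omega)
      rw [abs_eq (Int.natCast_nonneg _)] at hF
      rcases hval i hi with h1 | h1 <;> rw [h1] at hF
      · have him : i = n - 2 * m ∧ 1 ≤ m := by omega
        have h2 := IH (m - 1) (by omega) (by omega)
        rw [show n - 2 - 2 * (m - 1) = i by omega] at h2
        omega
      · rw [show n - 2 - 2 * m = i by omega]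
        exact h1
  -- odd indices below n-1 carry 1 (chain starting from value n-1)
  have hodd : ∀ m, 2 * m + 4 ≤ n → v (2 * m + 1) = 1 := by
    intro m
    induction m using Nat.strong_induction_on with
    | _ m IH =>
      intro hm
      obtain ⟨i, hi, hF⟩ := hsurj (n - 1 - 2 * m) (by omega)
      rw [abs_eq (Int.natCast_nonneg _)] at hF
      rcases hval i hi with h1 | h1 <;> rw [h1] at hF
      · rw [show 2 * m + 1 = i by omega]
        exact h1
      · have him : i = 2 * m - 1 ∧ 1 ≤ m := by omega
        have h2 := IH (m - 1) (by omega) (by omega)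
        rw [show 2 * (m - 1) + 1 = i by omega] at h2
        omega
  have heven' : ∀ i < n, i % 2 = 0 → v i = -1 := by
    intro i hi hp
    rw [show i = n - 2 - 2 * ((n - 2 - i) / 2) by omega]
    exact heven _ (by omega)
  have hodd' : ∀ i, i < n - 1 → i % 2 = 1 → v i = 1 := by
    intro i hi hp
    rw [show i = 2 * ((i - 1) / 2) + 1 by omega]
    exact hodd _ (by omega)
  -- counting the -1's
  have hcard : ((Finset.range n).filter (fun i => v i = -1)).card
      = n / 2 + (if v (n - 1) = -1 then 1 else 0) := by
    by_cases hv : v (n - 1) = -1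
    · have hset : (Finset.range n).filter (fun i => v i = -1)
          = insert (n - 1) ((Finset.range (n - 1)).filter (fun i => i % 2 = 0)) := by
        ext i
        simp only [Finset.mem_filter, Finset.mem_range, Finset.mem_insert]
        constructor
        · rintro ⟨h2, h3⟩
          by_cases h4 : i = n - 1
          · exact Or.inl h4
          · refine Or.inr ⟨by omega, ?_⟩
            by_contra h5
            have := hodd' i (by omega) (by omega)
            omega
        · rintro (h2 | ⟨h2, h3⟩)
          · subst h2; exact ⟨by omega, hv⟩
          · exact ⟨by omega, heven' i (by omega) h3⟩
      rw [hset, Finset.card_insert_of_notMem (by simp), aux_card_even, if_pos hv]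
      omega
    · have hset : (Finset.range n).filter (fun i => v i = -1)
          = (Finset.range (n - 1)).filter (fun i => i % 2 = 0) := by
        ext i
        simp only [Finset.mem_filter, Finset.mem_range]
        constructor
        · rintro ⟨h2, h3⟩
          have h4 : i ≠ n - 1 := by rintro rfl; exact hv h3
          refine ⟨by omega, ?_⟩
          by_contra h5
          have := hodd' i (by omega) (by omega)
          omega
        · rintro ⟨h2, h3⟩
          exact ⟨by omega, heven' i (by omega) h3⟩
      rw [hset, aux_card_even, if_neg hv]
      omega
  have hpar2 : (n / 2 + (if v (n - 1) = -1 then 1 else 0)) % 2 = 0 := by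
    rw [← hcard]; exact Nat.even_iff.mp hpar
  constructor
  · intro hE i hi
    have hE2 : n / 2 % 2 = 0 := Nat.even_iff.mp hE
    by_cases hp : i % 2 = 0
    · rw [if_pos hp]; exact heven' i hi hp
    · rw [if_neg hp]
      by_cases hl : i = n - 1
      · rcases hval i hi with h | h
        · exact h
        · rw [hl] at h; rw [if_pos h] at hpar2; omega
      · exact hodd' i (by omega) (by omega)
  · intro hE i hi
    have hE2 : n / 2 % 2 = 1 := by
      rcases Nat.even_or_odd (n / 2) with h | h
      · exact absurd h hE
      · exact Nat.odd_iff.mp h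
    by_cases hl : i = n - 1
    · rw [if_pos hl]
      rcases hval i hi with h | h
      · rw [hl] at h
        rw [if_neg (by rw [h]; norm_num)] at hpar2
        omega
      · exact h
    · rw [if_neg hl]
      by_cases hp : i % 2 = 0
      · rw [if_pos hp]; exact heven' i hi hp
      · rw [if_neg hp]; exact hodd' i (by omega) (by omega)
end

section
/- Define integers A_h^{k,n} for integers h, k, n by: A_h^{k,n} = 0 if h > k or h ≤ 0; A_k^{k,n} = 1; and A_h^{k,n} = −∑_{i=h+1}^{k} (−1)^{i−h} Θ(n,i,h) A_i^{k,n} otherwise, where Θ(n,i,h) = N(n−2h, i−h) with N(m,j) = (m/j)·C(m−j−1,j−1) for j ≥ 1 and N(m,0) = 1. Then for all h > 1 and k > 1 with 2k < n: A_h^{k,n} = A_{h−1}^{k−1,n−2}. -/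
/-- `N(m,j) = (m/j) C(m-j-1,j-1)` for `j ≥ 1`, `N(m,0) = 1`. -/
noncomputable def Ncount (m j : ℕ) : ℚ :=
  if j = 0 then 1 else ((m : ℚ) / (j : ℚ)) * (Nat.choose (m - j - 1) (j - 1) : ℚ)

/-- `Θ(n,k,h) = N(n-2h, k-h)`. -/
noncomputable def Theta (n k h : ℕ) : ℚ := Ncount (n - 2 * h) (k - h)

/-- The coefficients `A_h^{k,n}`: `A_h^{k,n} = 0` if `h > k` or `h ≤ 0`, `A_k^{k,n} = 1`,
and otherwise `A_h^{k,n} = -∑_{i=h+1}^k (-1)^{i-h} Θ(n,i,h) A_i^{k,n}`. -/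
noncomputable def Acoeff (k n h : ℕ) : ℚ :=
  if h = 0 ∨ k < h then 0
  else if h = k then 1
  else -∑ i ∈ (Finset.Ioc h k).attach,
    (-1 : ℚ) ^ ((i : ℕ) - h) * Theta n (i : ℕ) h * Acoeff k n (i : ℕ)
termination_by k - h
decreasing_by
  have hi := i.2
  rw [Finset.mem_Ioc] at hi
  omega

lemma shift_aux : ∀ d k n h, k - h = d → 1 < h → Acoeff k n h = Acoeff (k-1) (n-2) (h-1) := by
  intro d
  induction d using Nat.strong_induction_on with
  | _ d ih =>
    intro k n h hd hh
    rcases lt_trichotomy k h with hlt | heq | hgt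
    · rw [Acoeff, Acoeff, if_pos (by omega : h = 0 ∨ k < h),
        if_pos (by omega : h - 1 = 0 ∨ k - 1 < h - 1)]
    · rw [Acoeff, Acoeff, if_neg (by omega : ¬(h = 0 ∨ k < h)),
        if_neg (by omega : ¬(h - 1 = 0 ∨ k - 1 < h - 1)),
        if_pos (by omega : h = k), if_pos (by omega : h - 1 = k - 1)]
    · conv_lhs => rw [Acoeff]
      conv_rhs => rw [Acoeff]
      rw [if_neg (by omega : ¬(h = 0 ∨ k < h)),
        if_neg (by omega : ¬(h - 1 = 0 ∨ k - 1 < h - 1)),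
        if_neg (by omega : ¬h = k), if_neg (by omega : ¬(h - 1 = k - 1))]
      rw [Finset.sum_attach _ (fun i => (-1 : ℚ) ^ (i - h) * Theta n i h * Acoeff k n i),
        Finset.sum_attach _ (fun i => (-1 : ℚ) ^ (i - (h-1)) * Theta (n-2) i (h-1) * Acoeff (k-1) (n-2) i)]
      have hmap : Finset.Ioc h k = (Finset.Ioc (h-1) (k-1)).map (addRightEmbedding 1) := by
        rw [Finset.map_add_right_Ioc]
        congr 1 <;> omega
      rw [hmap, Finset.sum_map]
      congr 1
      apply Finset.sum_congr rfl
      intro j hj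
      rw [Finset.mem_Ioc] at hj
      have hj1 : h ≤ j := by omega
      have hthe : Theta n (addRightEmbedding 1 j) h = Theta (n-2) j (h-1) := by
        simp only [addRightEmbedding_apply, Theta]
        congr 1 <;> omega
      have hA : Acoeff k n (addRightEmbedding 1 j) = Acoeff (k-1) (n-2) j := by
        have := ih (k - (j+1)) (by omega) k n (j+1) rfl (by omega)
        simpa [addRightEmbedding_apply] using this
      rw [hthe, hA]
      congr 2
      simp only [addRightEmbedding_apply]
      rw [show j + 1 - h = j - (h - 1) from by omega]


/-- Property (1) of Lemma 5.1: `A_h^{k,n} = A_{h-1}^{k-1,n-2}` for `h > 1`, `k > 1`, `2k < n`. -/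
theorem stmt_16 (h k n : ℕ) (hh : 1 < h) (hk : 1 < k) (hn : 2 * k < n) :
    Acoeff k n h = Acoeff (k - 1) (n - 2) (h - 1) := by
  exact shift_aux (k - h) k n h rfl hh
end

section
/- With A_h^{k,n} defined as in Lemma 5.1 (A_h^{k,n}=0 for h>k or h≤0, A_k^{k,n}=1, and A_h^{k,n} = −∑_{i=h+1}^k (−1)^{i−h} Θ(n,i,h) A_i^{k,n} where Θ(n,i,h) = N(n−2h,i−h), N(m,j)=(m/j)C(m−j−1,j−1) for j≥1, N(m,0)=1), and assuming 2k < n−1 (so n ≠ 2k, 2k+1), the identity A_h^{k,n} = A_h^{k,n−1} + A_h^{k−1,n−1} holds for all 1 ≤ h ≤ k. -/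
lemma Acoeff_of_lt (k n h : ℕ) (h1 : k < h) : Acoeff k n h = 0 := by
  rw [Acoeff, if_pos (Or.inr h1)]

lemma Acoeff_self (k n : ℕ) (h1 : 1 ≤ k) : Acoeff k n k = 1 := by
  rw [Acoeff, if_neg (by omega), if_pos rfl]

lemma Acoeff_rec (k n h : ℕ) (h1 : 1 ≤ h) (h2 : h < k) :
    Acoeff k n h = -∑ i ∈ Finset.Ioc h k, (-1 : ℚ) ^ (i - h) * Theta n i h * Acoeff k n i := by
  rw [Acoeff, if_neg (by omega), if_neg (by omega)]
  congr 1
  exact Finset.sum_attach (Finset.Ioc h k) (fun i => (-1 : ℚ) ^ (i - h) * Theta n i h * Acoeff k n i)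

lemma Theta_diag (n h : ℕ) : Theta n h h = 1 := by
  simp [Theta, Ncount]

lemma Nrec (m j : ℕ) (hj : 1 ≤ j) (hm : 2 * j < m) :
    Ncount m j = Ncount (m - 1) j + Ncount (m - 2) (j - 1) := by
  rcases Nat.lt_or_ge j 2 with h2 | h2
  · obtain rfl : j = 1 := by omega
    simp only [Ncount, if_neg one_ne_zero, if_pos rfl]
    have h1 : m - 1 - 1 - 1 = m - 3 := by omega
    simp only [Nat.sub_self, Nat.choose_zero_right, h1]
    push_cast [Nat.cast_sub (by omega : 1 ≤ m)]
    ring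
  · obtain ⟨t, rfl⟩ : ∃ t, j = t + 2 := ⟨j - 2, by omega⟩
    obtain ⟨b, rfl⟩ : ∃ b, m = b + 2*t + 5 := ⟨m - (2*t+5), by omega⟩
    have e1 : b + 2*t + 5 - (t+2) - 1 = b + t + 2 := by omega
    have e2 : b + 2*t + 4 - (t+2) - 1 = b + t + 1 := by omega
    have e3 : b + 2*t + 5 - 2 = b + 2*t + 3 := by omega
    have e4 : t + 2 - 1 = t + 1 := by omega
    have e5 : b + 2*t + 3 - (t+1) - 1 = b + t + 1 := by omega
    have e6 : t + 1 - 1 = t := by omega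
    have e7 : b + 2*t + 5 - 1 = b + 2*t + 4 := by omega
    simp only [Ncount, if_neg (by omega : ¬ t + 2 = 0), if_neg (by omega : ¬ t + 1 = 0),
      e1, e2, e3, e4, e5, e6, e7]
    have pascal : Nat.choose (b+t+2) (t+1) = Nat.choose (b+t+1) t + Nat.choose (b+t+1) (t+1) := by
      rw [show b+t+2 = (b+t+1)+1 from rfl]
      exact Nat.choose_succ_succ' (b+t+1) t ▸ rfl
    have key : ((b+t+1).choose (t+1) : ℚ) * (t+1) = ((b+t+1).choose t : ℚ) * (b+1) := by
      have := Nat.choose_succ_right_eq (b+t+1) t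
      have e : b + t + 1 - t = b + 1 := by omega
      rw [e] at this
      exact_mod_cast congrArg (Nat.cast : ℕ → ℚ) this
    rw [pascal]
    push_cast
    have ht1 : ((t:ℚ)+1) ≠ 0 := by positivity
    have ht2 : ((t:ℚ)+2) ≠ 0 := by positivity
    field_simp
    linear_combination key

lemma main_ind (d : ℕ) : ∀ k n h, 2*k + 1 < n → 1 ≤ h → h ≤ k → k - h = d →
    Acoeff k n h = Acoeff k (n-1) h + Acoeff (k-1) (n-1) h := by
  induction d using Nat.strong_induction_on with
  | _ d IH =>
  intro k n h hn h1 hk hd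
  rcases eq_or_lt_of_le hk with rfl | hlt
  · rw [Acoeff_self _ _ h1, Acoeff_self _ _ h1, Acoeff_of_lt _ _ _ (by omega)]
    ring
  · have hsum : ∀ i ∈ Finset.Ioc h k,
        Acoeff k n i = Acoeff k (n-1) i + Acoeff (k-1) (n-1) i := by
      intro i hi
      rw [Finset.mem_Ioc] at hi
      exact IH (k - i) (by omega) k n i hn (by omega) hi.2 rfl
    have hTheta : ∀ i ∈ Finset.Ioc h k, Theta n i h = Theta (n-1) i h + Theta n i (h+1) := by
      intro i hi
      rw [Finset.mem_Ioc] at hi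
      have hr := Nrec (n - 2*h) (i - h) (by omega) (by omega)
      have ea : n - 2*h - 1 = n - 1 - 2*h := by omega
      have eb : n - 2*h - 2 = n - 2*(h+1) := by omega
      have ec : i - h - 1 = i - (h+1) := by omega
      rw [ea, eb, ec] at hr
      exact hr
    have split : (∑ i ∈ Finset.Ioc h k, (-1:ℚ)^(i-h) * Theta n i h * Acoeff k n i)
        = (∑ i ∈ Finset.Ioc h k, (-1:ℚ)^(i-h) * Theta (n-1) i h * Acoeff k (n-1) i)
        + (∑ i ∈ Finset.Ioc h k, (-1:ℚ)^(i-h) * Theta (n-1) i h * Acoeff (k-1) (n-1) i)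
        + (∑ i ∈ Finset.Ioc h k, (-1:ℚ)^(i-h) * Theta n i (h+1) * Acoeff k n i) := by
      rw [← Finset.sum_add_distrib, ← Finset.sum_add_distrib]
      apply Finset.sum_congr rfl
      intro i hi
      rw [hsum i hi, hTheta i hi]; ring
    have hb := Acoeff_rec k (n-1) h h1 hlt
    have hR : (∑ i ∈ Finset.Ioc h k, (-1:ℚ)^(i-h) * Theta (n-1) i h * Acoeff (k-1) (n-1) i)
        + (∑ i ∈ Finset.Ioc h k, (-1:ℚ)^(i-h) * Theta n i (h+1) * Acoeff k n i)
        = - Acoeff (k-1) (n-1) h := by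
      rcases eq_or_lt_of_le (by omega : h + 1 ≤ k) with hk1 | hk1
      · -- h + 1 = k
        rw [← hk1, Nat.Ioc_succ_singleton]
        simp only [Finset.sum_singleton]
        rw [show h + 1 - h = 1 from by omega, Theta_diag,
          Acoeff_self (h+1) n (by omega),
          Acoeff_of_lt (h+1-1) (n-1) (h+1) (by omega),
          show h+1-1 = h from by omega, Acoeff_self h (n-1) h1]
        ring
      · -- h + 1 < k
        obtain ⟨K, rfl⟩ : ∃ K, k = K + 1 := ⟨k - 1, by omega⟩
        have hY : (∑ i ∈ Finset.Ioc h (K+1), (-1:ℚ)^(i-h) * Theta (n-1) i h * Acoeff K (n-1) i)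
            = - Acoeff K (n-1) h := by
          rw [Finset.sum_Ioc_succ_top (by omega : h ≤ K),
            Acoeff_of_lt K (n-1) (K+1) (by omega),
            Acoeff_rec K (n-1) h h1 (by omega)]
          ring
        have hins : Finset.Ioc h (K+1) = insert (h+1) (Finset.Ioc (h+1) (K+1)) := by
          ext x
          simp only [Finset.mem_Ioc, Finset.mem_insert]
          omega
        have hZ : (∑ i ∈ Finset.Ioc h (K+1), (-1:ℚ)^(i-h) * Theta n i (h+1) * Acoeff (K+1) n i)
            = 0 := by
          rw [hins, Finset.sum_insert (by simp)]
          have tail : (∑ i ∈ Finset.Ioc (h+1) (K+1), (-1:ℚ)^(i-h) * Theta n i (h+1) * Acoeff (K+1) n i)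
              = -∑ i ∈ Finset.Ioc (h+1) (K+1), (-1:ℚ)^(i-(h+1)) * Theta n i (h+1) * Acoeff (K+1) n i := by
            rw [← Finset.sum_neg_distrib]
            apply Finset.sum_congr rfl
            intro i hi
            rw [Finset.mem_Ioc] at hi
            rw [show i - h = (i - (h+1)) + 1 from by omega, pow_succ]
            ring
          rw [tail, ← Acoeff_rec (K+1) n (h+1) (by omega) hk1]
          rw [show h + 1 - h = 1 from by omega, Theta_diag]
          ring
        have e1 : K + 1 - 1 = K := by omega
        rw [e1] at *
        rw [hZ, hY]
        ring
    rw [Acoeff_rec k n h h1 hlt, split]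
    rw [hb] at *
    linarith [hR]

/-- Property (2) of Lemma 5.1: if `2k < n-1` then
`A_h^{k,n} = A_h^{k,n-1} + A_h^{k-1,n-1}` for all `1 ≤ h ≤ k`. -/
theorem stmt_17 (k n : ℕ) (hn : 2 * k < n - 1) :
    ∀ h, 1 ≤ h → h ≤ k → Acoeff k n h = Acoeff k (n - 1) h + Acoeff (k - 1) (n - 1) h := by
  intro h h1 hk
  exact main_ind (k - h) k n h (by omega) h1 hk rfl
end
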